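/- arXiv:1410.8328 — 3 statements merged into one kernel-verified Lean document; each statement's English description precedes it below -/
import Mathlib

section
/- Define a sequence of indices recursively by a_1 = 1 and a_{k+1} = a_k + d⁺(v_{a_k}) + 1, where d⁺(v_{a_k}) is the out-degree of v_{a_k} in the infinite Jaco graph J_∞(1). Then for every n ≥ 1, the set I_n = {v_{a_k} : a_k ≤ n} is a maximum independent set of the underlying graph of the finite Jaco graph J_n(1); in particular the independence number satisfies α(J_n(1)) = |{k : a_k ≤ n}|. -/
open SimpleGraph

/-- In-degree of vertex `j` in the infinite Jaco graph `J_∞(1)`: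
the number of `i < j` with an arc `(v_i, v_j)`, i.e. `i < j` and `j ≤ 2i - d⁻(v_i)`. -/
noncomputable def jacoInDeg (j : ℕ) : ℕ :=
  Nat.strongRecOn j fun j ih =>
    ((Finset.range j).attach.filter
      (fun i => j ≤ 2 * i.1 - ih i.1 (Finset.mem_range.mp i.2))).card

/-- Out-degree of vertex `i` in `J_∞(1)`: the number of `j` with `i < j ≤ 2i - d⁻(v_i)`. -/
noncomputable def jacoOutDeg (i : ℕ) : ℕ := (Finset.Ioc i (2 * i - jacoInDeg i)).card

/-- The underlying (undirected, simple) graph of the infinite Jaco graph `J_∞(1)` on `ℕ`,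
with vertex `i` playing the role of `v_i`. -/
def JacoInf : SimpleGraph ℕ where
  Adj i j := (i < j ∧ j ≤ 2 * i - jacoInDeg i) ∨ (j < i ∧ i ≤ 2 * j - jacoInDeg j)
  symm := ⟨fun i j h => Or.symm h⟩
  loopless := ⟨fun i h => by rcases h with ⟨h, -⟩ | ⟨h, -⟩ <;> omega⟩

/-- The underlying graph of the finite Jaco graph `J_n(1)`: the subgraph of `J_∞(1)`
induced by `{v_1, …, v_n}`, with `(k : Fin n)` representing `v_{k+1}`. -/
def Jaco (n : ℕ) : SimpleGraph (Fin n) := JacoInf.comap (fun k => (k : ℕ) + 1)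

/-- `s` is an independent set of `G`. -/
def IsIndepSet {V : Type*} (G : SimpleGraph V) (s : Set V) : Prop :=
  s.Pairwise fun a b => ¬ G.Adj a b

/-- The independence number of `G`. -/
noncomputable def indepNum {V : Type*} [Fintype V] (G : SimpleGraph V) : ℕ :=
  sSup {k | ∃ s : Set V, _root_.IsIndepSet G s ∧ s.ncard = k}

/-- `s` is a vertex cover of `G`: it meets every edge. -/
def IsVertexCover {V : Type*} (G : SimpleGraph V) (s : Set V) : Prop :=
  ∀ ⦃a b : V⦄, G.Adj a b → a ∈ s ∨ b ∈ s

/-- The vertex covering number of `G`. -/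
noncomputable def coverNum {V : Type*} [Fintype V] (G : SimpleGraph V) : ℕ :=
  sInf {k | ∃ s : Set V, _root_.IsVertexCover G s ∧ s.ncard = k}

/-- `s` is a dominating set of `G`. -/
def IsDomSet {V : Type*} (G : SimpleGraph V) (s : Set V) : Prop :=
  ∀ v ∉ s, ∃ u ∈ s, G.Adj u v

/-- The domination number `γ(G)`. -/
noncomputable def domNum {V : Type*} [Fintype V] (G : SimpleGraph V) : ℕ :=
  sInf {k | ∃ s : Set V, IsDomSet G s ∧ s.ncard = k}

/-- The murtage number `m(G)`: the minimum number of edges whose addition to `G`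
strictly decreases the domination number (and `0` when `γ(G) = 1`). -/
noncomputable def murtage {V : Type*} [Fintype V] (G : SimpleGraph V) : ℕ :=
  if domNum G = 1 then 0
  else sInf {k | ∃ H : SimpleGraph V, G ≤ H ∧ domNum H < domNum G ∧
        (H.edgeSet \ G.edgeSet).ncard = k}

/-- `γ⁻(G)`: the minimum number of vertices whose removal strictly decreases
the domination number. -/
noncomputable def gammaMinus {V : Type*} [Fintype V] (G : SimpleGraph V) : ℕ :=
  sInf {k | ∃ s : Set V, s.ncard = k ∧
        @domNum _ (Set.toFinite sᶜ).fintype (G.induce sᶜ) < domNum G}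

/-- The bondage number `b(G)`: the minimum number of edges whose removal strictly
increases the domination number. -/
noncomputable def bondage {V : Type*} [Fintype V] (G : SimpleGraph V) : ℕ :=
  sInf {k | ∃ H : SimpleGraph V, H ≤ G ∧ domNum G < domNum H ∧
        (G.edgeSet \ H.edgeSet).ncard = k}

/-- The maximum degree `Δ(G)`. -/
noncomputable def maxDeg {V : Type*} [Fintype V] (G : SimpleGraph V) : ℕ :=
  Finset.univ.sup fun v => (G.neighborSet v).ncard

/-- The recursively defined index sequence: `a 0 = 1` (i.e. `a_1 = 1`) and
`a (k+1) = a k + d⁺(v_{a k}) + 1`. -/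
noncomputable def aSeq : ℕ → ℕ
  | 0 => 1
  | k + 1 => aSeq k + jacoOutDeg (aSeq k) + 1

noncomputable def jacoF (i : ℕ) : ℕ := 2 * i - jacoInDeg i

lemma jacoInDeg_eq (j : ℕ) :
    jacoInDeg j = ((Finset.range j).filter (fun i => j ≤ 2 * i - jacoInDeg i)).card := by
  have h : jacoInDeg j =
      ((Finset.range j).attach.filter (fun i => j ≤ 2 * i.1 - jacoInDeg i.1)).card :=
    Nat.strongRecOn_eq _ j
  rw [h, Finset.filter_attach (fun i => j ≤ 2 * i - jacoInDeg i) (Finset.range j)]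
  simp

lemma jacoInDeg_le (j : ℕ) : jacoInDeg j ≤ j := by
  rw [jacoInDeg_eq]
  exact (Finset.card_filter_le _ _).trans (by simp)

lemma le_jacoF (i : ℕ) : i ≤ jacoF i := by
  have := jacoInDeg_le i; unfold jacoF; omega

lemma jacoInDeg_succ_le (j : ℕ) : jacoInDeg (j + 1) ≤ jacoInDeg j + 1 := by
  rw [jacoInDeg_eq (j + 1), jacoInDeg_eq j]
  have h1 : (Finset.filter (fun i => j + 1 ≤ 2 * i - jacoInDeg i) (Finset.range (j+1))).card ≤
      (Finset.filter (fun i => j + 1 ≤ 2 * i - jacoInDeg i) (Finset.range j)).card + 1 := by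
    rw [Finset.range_add_one, Finset.filter_insert]
    split
    · exact (Finset.card_insert_le _ _)
    · omega
  have h2 : (Finset.filter (fun i => j + 1 ≤ 2 * i - jacoInDeg i) (Finset.range j)).card ≤
      (Finset.filter (fun i => j ≤ 2 * i - jacoInDeg i) (Finset.range j)).card :=
    Finset.card_le_card (Finset.monotone_filter_right _ (fun i h => by omega))
  omega

lemma jacoF_strictMono : StrictMono jacoF := by
  apply strictMono_nat_of_lt_succ
  intro j
  have h1 := jacoInDeg_succ_le j
  have h2 := jacoInDeg_le j
  unfold jacoF; omega

lemma jacoOutDeg_eq (i : ℕ) : jacoOutDeg i = jacoF i - i := by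
  rw [jacoOutDeg, Nat.card_Ioc]; rfl

lemma aSeq_succ (k : ℕ) : aSeq (k + 1) = jacoF (aSeq k) + 1 := by
  rw [aSeq, jacoOutDeg_eq]
  have := le_jacoF (aSeq k); omega

lemma aSeq_strictMono : StrictMono aSeq := by
  apply strictMono_nat_of_lt_succ
  intro k; rw [aSeq]; omega

lemma aSeq_zero : aSeq 0 = 1 := rfl

lemma one_le_aSeq (k : ℕ) : 1 ≤ aSeq k := by
  induction k with
  | zero => rfl
  | succ k ih => rw [aSeq]; omega

lemma not_adj_aSeq {k l : ℕ} (h : k < l) :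
    ¬ ((aSeq k < aSeq l ∧ aSeq l ≤ 2 * aSeq k - jacoInDeg (aSeq k)) ∨
       (aSeq l < aSeq k ∧ aSeq k ≤ 2 * aSeq l - jacoInDeg (aSeq l))) := by
  have h1 : aSeq k < aSeq l := aSeq_strictMono h
  have h2 : aSeq (k + 1) ≤ aSeq l := aSeq_strictMono.monotone h
  rw [aSeq_succ] at h2
  have : jacoF (aSeq k) = 2 * aSeq k - jacoInDeg (aSeq k) := rfl
  omega

/-- For every `n ≥ 1`, the set `I_n = {v_{a_k} : a_k ≤ n}` is a maximum
independent set of the underlying graph of `J_n(1)`; in particular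
`α(J_n(1)) = |{k : a_k ≤ n}|`. (Vertex `v : Fin n` represents `v_{v+1}`.) -/
theorem jaco_max_indep_set (n : ℕ) (hn : 1 ≤ n) :
    _root_.IsIndepSet (Jaco n) {v : Fin n | ∃ k : ℕ, aSeq k = (v : ℕ) + 1} ∧
    ({v : Fin n | ∃ k : ℕ, aSeq k = (v : ℕ) + 1}).ncard = _root_.indepNum (Jaco n) ∧
    _root_.indepNum (Jaco n) = {k : ℕ | aSeq k ≤ n}.ncard := by
  classical
  set S : Set ℕ := {k | aSeq k ≤ n} with hS
  have hbd : ∀ k ∈ S, k ≤ n := fun k hk => le_trans aSeq_strictMono.le_apply hk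
  have hSne : S.Nonempty := ⟨0, by simpa [hS, aSeq_zero] using hn⟩
  have hSbdd : BddAbove S := ⟨n, hbd⟩
  set K := sSup S with hK
  have hKmem : K ∈ S := Nat.sSup_mem hSne hSbdd
  have hmem_iff : ∀ k, k ∈ S ↔ k ≤ K := by
    intro k
    exact ⟨fun hk => le_csSup hSbdd hk,
      fun hk => le_trans (aSeq_strictMono.monotone hk) hKmem⟩
  have hSIic : S = Set.Iic K := Set.ext fun k => hmem_iff k
  have hScard : S.ncard = K + 1 := by
    rw [hSIic, ← Finset.coe_Iic, Set.ncard_coe_finset, Nat.card_Iic]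
  set T : Set (Fin n) := {v : Fin n | ∃ k : ℕ, aSeq k = (v : ℕ) + 1} with hT
  -- independence of T
  have hTindep : _root_.IsIndepSet (Jaco n) T := by
    rintro u ⟨k, hk⟩ v ⟨l, hl⟩ huv hadj
    have hkl : k ≠ l := by
      rintro rfl
      exact huv (Fin.ext (by omega))
    have hadj2 : (((u:ℕ)+1 < (v:ℕ)+1 ∧ (v:ℕ)+1 ≤ 2*((u:ℕ)+1) - jacoInDeg ((u:ℕ)+1)) ∨
        ((v:ℕ)+1 < (u:ℕ)+1 ∧ (u:ℕ)+1 ≤ 2*((v:ℕ)+1) - jacoInDeg ((v:ℕ)+1))) := hadj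
    rw [← hk, ← hl] at hadj2
    rcases hkl.lt_or_gt with h | h
    · exact not_adj_aSeq h hadj2
    · exact not_adj_aSeq h hadj2.symm
  -- cardinality of T
  set g : ℕ → Fin n := fun k => ⟨min (aSeq k - 1) (n-1), by omega⟩ with hg
  have hgval : ∀ k ≤ K, (g k : ℕ) = aSeq k - 1 := by
    intro k hk
    have h1 : aSeq k ≤ n := (hmem_iff k).2 hk
    show min (aSeq k - 1) (n-1) = aSeq k - 1
    omega
  have hTim : T = g '' (Set.Iic K) := by
    ext v
    simp only [hT, Set.mem_setOf_eq, Set.mem_image, Set.mem_Iic]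
    constructor
    · rintro ⟨k, hk⟩
      have hv := v.isLt
      have h1 : aSeq k ≤ n := by omega
      have h2 : k ≤ K := (hmem_iff k).1 h1
      exact ⟨k, h2, Fin.ext (by rw [hgval k h2]; omega)⟩
    · rintro ⟨k, hk, rfl⟩
      refine ⟨k, ?_⟩
      rw [hgval k hk]
      have := one_le_aSeq k
      omega
  have hginj : Set.InjOn g (Set.Iic K) := by
    intro a ha b hb hab
    have h := congrArg Fin.val hab
    rw [hgval a ha, hgval b hb] at h
    have h1 := one_le_aSeq a
    have h2 := one_le_aSeq b
    exact aSeq_strictMono.injective (by omega)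
  have hTcard : T.ncard = K + 1 := by
    rw [hTim, Set.ncard_image_of_injOn hginj, ← Finset.coe_Iic, Set.ncard_coe_finset,
      Nat.card_Iic]
  -- upper bound
  have hub : ∀ s : Set (Fin n), _root_.IsIndepSet (Jaco n) s → s.ncard ≤ K + 1 := by
    intro s hs
    set m := s.ncard with hm
    rcases Nat.eq_zero_or_pos m with h0 | hpos
    · omega
    have hfin : s.Finite := Set.toFinite s
    have htcard : hfin.toFinset.card = m := by rw [hm, Set.ncard_eq_toFinset_card _ hfin]
    set e := hfin.toFinset.orderIsoOfFin htcard with he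
    have hbmono : ∀ i j : Fin m, i < j → ((e i : Fin n) : ℕ) < ((e j : Fin n) : ℕ) := by
      intro i j hij
      have := e.strictMono hij
      exact this
    have hmemS : ∀ i : Fin m, (e i : Fin n) ∈ s := by
      intro i
      have := (e i).2
      rwa [Set.Finite.mem_toFinset] at this
    have key : ∀ i : ℕ, ∀ h : i < m, aSeq i ≤ ((e ⟨i, h⟩ : Fin n) : ℕ) + 1 := by
      intro i
      induction i with
      | zero => intro h; rw [aSeq_zero]; omega
      | succ i ih =>
        intro h
        have hi : i < m := by omega
        have hih := ih hi
        have hlt : ((e ⟨i, hi⟩ : Fin n) : ℕ) < ((e ⟨i+1, h⟩ : Fin n) : ℕ) :=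
          hbmono _ _ (by simp [Fin.lt_def])
        have hne : (e ⟨i, hi⟩ : Fin n) ≠ (e ⟨i+1, h⟩ : Fin n) := by
          intro hEq
          exact absurd (congrArg Fin.val hEq) (by omega)
        have hnadj := hs (hmemS ⟨i, hi⟩) (hmemS ⟨i+1, h⟩) hne
        have hnadj2 : ¬ ((((e ⟨i, hi⟩ : Fin n):ℕ)+1 < ((e ⟨i+1, h⟩ : Fin n):ℕ)+1 ∧
            ((e ⟨i+1, h⟩ : Fin n):ℕ)+1 ≤ 2*(((e ⟨i, hi⟩ : Fin n):ℕ)+1) -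
              jacoInDeg (((e ⟨i, hi⟩ : Fin n):ℕ)+1)) ∨
            (((e ⟨i+1, h⟩ : Fin n):ℕ)+1 < ((e ⟨i, hi⟩ : Fin n):ℕ)+1 ∧
            ((e ⟨i, hi⟩ : Fin n):ℕ)+1 ≤ 2*(((e ⟨i+1, h⟩ : Fin n):ℕ)+1) -
              jacoInDeg (((e ⟨i+1, h⟩ : Fin n):ℕ)+1))) := hnadj
        have hFdef : jacoF (((e ⟨i, hi⟩ : Fin n):ℕ)+1) =
            2*(((e ⟨i, hi⟩ : Fin n):ℕ)+1) - jacoInDeg (((e ⟨i, hi⟩ : Fin n):ℕ)+1) := rfl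
        have hgt : jacoF (((e ⟨i, hi⟩ : Fin n):ℕ)+1) < ((e ⟨i+1, h⟩ : Fin n):ℕ)+1 := by
          omega
        have hFmono : jacoF (aSeq i) ≤ jacoF (((e ⟨i, hi⟩ : Fin n):ℕ)+1) :=
          jacoF_strictMono.monotone hih
        rw [aSeq_succ]
        omega
    have hlast : aSeq (m-1) ≤ n := by
      have hmm : m - 1 < m := by omega
      have h := key (m-1) hmm
      have h2 := (e ⟨m-1, hmm⟩ : Fin n).isLt
      omega
    have : m - 1 ≤ K := (hmem_iff _).1 hlast
    omega
  have hnum : _root_.indepNum (Jaco n) = K + 1 := by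
    apply le_antisymm
    · exact csSup_le ⟨T.ncard, T, hTindep, rfl⟩ (by rintro k ⟨s, hind, rfl⟩; exact hub s hind)
    · exact le_csSup ⟨K+1, by rintro k ⟨s, hind, rfl⟩; exact hub s hind⟩ ⟨T, hTindep, hTcard⟩
  exact ⟨hTindep, by rw [hTcard, hnum], by rw [hnum, hScard]⟩
end

section
/- Let G be a finite simple connected graph with murtage number m(G) ≥ 1. Then m(G) = γ⁻(G), i.e., the minimum number of edges whose addition to G strictly decreases the domination number equals the minimum number of vertices whose removal from G strictly decreases the domination number. -/
open SimpleGraph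

lemma exists_min_domSet {V : Type*} (G : SimpleGraph V) :
    ∃ s : Set V, IsDomSet G s ∧ s.ncard = sInf {k | ∃ s : Set V, IsDomSet G s ∧ s.ncard = k} := by
  have hne : {k | ∃ s : Set V, IsDomSet G s ∧ s.ncard = k}.Nonempty :=
    ⟨_, Set.univ, fun v hv => absurd (Set.mem_univ v) hv, rfl⟩
  obtain ⟨s, h1, h2⟩ := Nat.sInf_mem hne
  exact ⟨s, h1, h2⟩

lemma domNum_eq_sInf {V : Type*} [Fintype V] (G : SimpleGraph V) :
    domNum G = sInf {k | ∃ s : Set V, IsDomSet G s ∧ s.ncard = k} := rfl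

/-- For a finite simple connected graph `G` with `m(G) ≥ 1`,
the murtage number equals `γ⁻(G)`. -/
theorem murtage_eq_gammaMinus {V : Type*} [Fintype V] (G : SimpleGraph V)
    (hconn : G.Connected) (hm : 1 ≤ murtage G) :
    murtage G = gammaMinus G := by
  classical
  obtain ⟨v0⟩ : Nonempty V := hconn.nonempty
  have hγ1 : domNum G ≠ 1 := by
    intro h
    simp [murtage, h] at hm
  have hMdef : murtage G = sInf {k | ∃ H : SimpleGraph V, G ≤ H ∧ domNum H < domNum G ∧
      (H.edgeSet \ G.edgeSet).ncard = k} := if_neg hγ1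
  have hγ0 : domNum G ≠ 0 := by
    intro h
    have h0 : 0 ∈ {k | ∃ s : Set V, IsDomSet G s ∧ s.ncard = k} := by
      rw [domNum_eq_sInf] at h
      rw [← h]
      exact Nat.sInf_mem ⟨_, Set.univ, fun v hv => absurd (Set.mem_univ v) hv, rfl⟩
    obtain ⟨s, hs, hcard⟩ := h0
    have hse : s = ∅ := (Set.ncard_eq_zero (Set.toFinite s)).mp hcard
    obtain ⟨u, hu, -⟩ := hs v0 (by simp [hse])
    simp [hse] at hu
  have hγ2 : 2 ≤ domNum G := by omega
  -- the gammaMinus set is nonempty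
  have hsingleton : ∀ (v : V), @domNum _ (Set.toFinite ({v}ᶜ : Set V)ᶜ).fintype
      (G.induce ({v}ᶜ : Set V)ᶜ) < domNum G := by
    intro v
    have h1 : @domNum _ (Set.toFinite ({v}ᶜ : Set V)ᶜ).fintype (G.induce ({v}ᶜ : Set V)ᶜ) ≤ 1 := by
      apply Nat.sInf_le
      refine ⟨{(⟨v, by simp⟩ : ↥({v}ᶜ : Set V)ᶜ)}, ?_, Set.ncard_singleton _⟩
      intro w hw
      exfalso
      apply hw
      have : w.1 ∈ ({v}ᶜ : Set V)ᶜ := w.2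
      simp only [compl_compl, Set.mem_singleton_iff] at this
      exact Set.mem_singleton_iff.mpr (Subtype.ext this)
    omega
  have hΓne : {k | ∃ s : Set V, s.ncard = k ∧
      @domNum _ (Set.toFinite sᶜ).fintype (G.induce sᶜ) < domNum G}.Nonempty :=
    ⟨_, ({v0}ᶜ : Set V), rfl, hsingleton v0⟩
  -- the murtage set is nonempty (else sInf = 0 contradicting hm)
  have hMne : {k | ∃ H : SimpleGraph V, G ≤ H ∧ domNum H < domNum G ∧
      (H.edgeSet \ G.edgeSet).ncard = k}.Nonempty := by
    by_contra h
    rw [Set.not_nonempty_iff_eq_empty] at h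
    rw [hMdef, h] at hm
    simp at hm
  apply le_antisymm
  · -- murtage ≤ gammaMinus
    obtain ⟨S, hScard, hSdom⟩ := Nat.sInf_mem hΓne
    -- S has complement nonempty
    have hScompl : (Sᶜ : Set V).Nonempty := by
      by_contra h
      rw [Set.not_nonempty_iff_eq_empty, ← Set.compl_univ, compl_inj_iff] at h
      subst h
      have hle : gammaMinus G ≤ ({v0}ᶜ : Set V).ncard :=
        Nat.sInf_le ⟨({v0}ᶜ : Set V), rfl, hsingleton v0⟩
      have h1 : ({v0}ᶜ : Set V).ncard + 1 = Nat.card V := by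
        have := Set.ncard_add_ncard_compl ({v0}ᶜ : Set V)
        simpa using this
      have h2 : (Set.univ : Set V).ncard = Nat.card V := by
        simp [Set.ncard_univ]
      rw [show gammaMinus G = sInf {k | ∃ s : Set V, s.ncard = k ∧ @domNum _ (Set.toFinite sᶜ).fintype (G.induce sᶜ) < domNum G} from rfl] at hle
      omega
    -- minimum dominating set of the induced graph
    obtain ⟨D, hD, hDcard⟩ := exists_min_domSet (G.induce Sᶜ)
    have hDlt : D.ncard < domNum G := by
      rw [hDcard]
      exact hSdom
    -- D is nonempty
    obtain ⟨x, hx⟩ : D.Nonempty := by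
      by_contra h
      rw [Set.not_nonempty_iff_eq_empty] at h
      obtain ⟨w, hw⟩ := hScompl
      obtain ⟨u, hu, -⟩ := hD ⟨w, hw⟩ (by simp [h])
      simp [h] at hu
    set u : V := x.1 with hu_def
    have huS : u ∈ Sᶜ := x.2
    -- the new graph
    set H : SimpleGraph V := {
      Adj := fun a b => G.Adj a b ∨ (a = u ∧ b ∈ S) ∨ (b = u ∧ a ∈ S)
      symm := by
        constructor; intro a b h
        rcases h with h | h | h
        · exact Or.inl h.symm
        · exact Or.inr (Or.inr h)
        · exact Or.inr (Or.inl h)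
      loopless := by
        constructor; intro a h
        rcases h with h | ⟨rfl, h⟩ | ⟨rfl, h⟩
        · exact G.loopless.irrefl a h
        · exact huS h
        · exact huS h } with hH_def
    have hGH : G ≤ H := fun a b h => Or.inl h
    have hHdom : domNum H < domNum G := by
      have hmem : D.ncard ∈ {k | ∃ s : Set V, IsDomSet H s ∧ s.ncard = k} := by
        refine ⟨Subtype.val '' D, ?_, Set.ncard_image_of_injective _ Subtype.val_injective⟩
        intro v hv
        by_cases hvS : v ∈ S
        · exact ⟨u, ⟨x, hx, rfl⟩, Or.inr (Or.inl ⟨rfl, hvS⟩)⟩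
        · have hvSc : v ∈ Sᶜ := hvS
          have hvD : (⟨v, hvSc⟩ : ↥Sᶜ) ∉ D := fun h => hv ⟨_, h, rfl⟩
          obtain ⟨d, hd, hadj⟩ := hD ⟨v, hvSc⟩ hvD
          exact ⟨d.1, ⟨d, hd, rfl⟩, Or.inl hadj⟩
      calc domNum H ≤ D.ncard := Nat.sInf_le hmem
        _ < domNum G := hDlt
    have hedge : (H.edgeSet \ G.edgeSet) ⊆ (fun v => s(u, v)) '' S := by
      rintro e ⟨he1, he2⟩
      induction e with
      | h a b =>
        rw [H.mem_edgeSet] at he1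
        have he2' : ¬ G.Adj a b := fun h => he2 (G.mem_edgeSet.mpr h)
        rcases he1 with h | ⟨rfl, h⟩ | ⟨rfl, h⟩
        · exact absurd h he2'
        · exact ⟨b, h, rfl⟩
        · exact ⟨a, h, Sym2.eq_swap⟩
    have hcount : (H.edgeSet \ G.edgeSet).ncard ≤ gammaMinus G := by
      calc (H.edgeSet \ G.edgeSet).ncard
          ≤ ((fun v => s(u, v)) '' S).ncard :=
            Set.ncard_le_ncard hedge (Set.Finite.image _ (Set.toFinite S))
        _ ≤ S.ncard := Set.ncard_image_le (Set.toFinite S)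
        _ = gammaMinus G := hScard
    calc murtage G ≤ (H.edgeSet \ G.edgeSet).ncard := by
          rw [hMdef]; exact Nat.sInf_le ⟨H, hGH, hHdom, rfl⟩
      _ ≤ gammaMinus G := hcount
  · -- gammaMinus ≤ murtage
    obtain ⟨H, hGH, hHdom, hHcard⟩ := Nat.sInf_mem hMne
    obtain ⟨D, hD, hDcard⟩ := exists_min_domSet H
    have hDlt : D.ncard < domNum G := by rw [hDcard]; exact hHdom
    set S : Set V := {v | v ∉ D ∧ ∀ u ∈ D, ¬ G.Adj u v} with hS_def
    have hDS : ∀ d ∈ D, d ∈ Sᶜ := fun d hd hds => hds.1 hd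
    -- induced graph on Sᶜ has small domination number
    have hSdom : @domNum _ (Set.toFinite Sᶜ).fintype (G.induce Sᶜ) < domNum G := by
      have hmem : D.ncard ∈ {k | ∃ s : Set ↥Sᶜ, IsDomSet (G.induce Sᶜ) s ∧ s.ncard = k} := by
        refine ⟨{x : ↥Sᶜ | x.1 ∈ D}, ?_, ?_⟩
        · intro v hv
          have hvD : v.1 ∉ D := hv
          have hvS : v.1 ∉ S := v.2
          have : ∃ w ∈ D, G.Adj w v.1 := by
            by_contra h
            push_neg at h
            exact hvS ⟨hvD, h⟩
          obtain ⟨w, hw, hadj⟩ := this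
          exact ⟨⟨w, hDS w hw⟩, hw, hadj⟩
        · have himg : Subtype.val '' {x : ↥Sᶜ | x.1 ∈ D} = D := by
            ext w
            constructor
            · rintro ⟨y, hy, rfl⟩; exact hy
            · intro hw; exact ⟨⟨w, hDS w hw⟩, hw, rfl⟩
          calc {x : ↥Sᶜ | x.1 ∈ D}.ncard
              = (Subtype.val '' {x : ↥Sᶜ | x.1 ∈ D}).ncard :=
                (Set.ncard_image_of_injective _ Subtype.val_injective).symm
            _ = D.ncard := by rw [himg]
      calc @domNum _ (Set.toFinite Sᶜ).fintype (G.induce Sᶜ) ≤ D.ncard := Nat.sInf_le hmem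
        _ < domNum G := hDlt
    -- |S| ≤ number of added edges
    have hScount : S.ncard ≤ (H.edgeSet \ G.edgeSet).ncard := by
      set f : V → Sym2 V := fun v =>
        if h : ∃ w ∈ D, H.Adj w v ∧ ¬ G.Adj w v then s(h.choose, v) else s(v, v) with hf_def
      have hfspec : ∀ v ∈ S, ∃ w ∈ D, f v = s(w, v) ∧ H.Adj w v ∧ ¬ G.Adj w v := by
        intro v hv
        have hex : ∃ w ∈ D, H.Adj w v ∧ ¬ G.Adj w v := by
          obtain ⟨w, hw, hadj⟩ := hD v hv.1
          exact ⟨w, hw, hadj, hv.2 w hw⟩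
        obtain ⟨hw, hadj, hnadj⟩ := hex.choose_spec
        exact ⟨hex.choose, hw, by rw [hf_def]; simp only [dif_pos hex], hadj, hnadj⟩
      apply Set.ncard_le_ncard_of_injOn f
      · intro v hv
        obtain ⟨w, hw, hfeq, hadj, hnadj⟩ := hfspec v hv
        rw [hfeq]
        exact ⟨H.mem_edgeSet.mpr hadj, fun h => hnadj (G.mem_edgeSet.mp h)⟩
      · intro v1 hv1 v2 hv2 heq
        obtain ⟨w1, hw1, hf1, -, -⟩ := hfspec v1 hv1
        obtain ⟨w2, hw2, hf2, -, -⟩ := hfspec v2 hv2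
        rw [hf1, hf2, Sym2.eq_iff] at heq
        rcases heq with ⟨-, h⟩ | ⟨h, h'⟩
        · exact h
        · exact absurd (h' ▸ hw2) hv1.1
    calc gammaMinus G ≤ S.ncard := Nat.sInf_le ⟨S, rfl, hSdom⟩
      _ ≤ (H.edgeSet \ G.edgeSet).ncard := hScount
      _ = murtage G := hHcard.trans hMdef.symm
end

section
/- For n ∈ {4, 5, 12, 13}, the murtage number of the underlying graph of the finite Jaco graph J_n(1) equals 1. -/
open SimpleGraph

/-- Table of in-degrees of vertices `0,…,13` of `J_∞(1)`. -/
def jf (j : ℕ) : ℕ := [0, 0, 1, 1, 1, 2, 2, 3, 3, 3, 4, 4, 4, 5].getD j 0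

lemma jacoInDeg_val : ∀ j, j ≤ 13 → jacoInDeg j = jf j := by
  intro j
  induction j using Nat.strong_induction_on with
  | _ j ih =>
    intro hj
    rw [jacoInDeg_eq]
    rw [Finset.filter_congr (q := fun i => j ≤ 2 * i - jf i)
      (fun i hi => by rw [ih i (Finset.mem_range.mp hi) (by have := Finset.mem_range.mp hi; omega)])]
    interval_cases j <;> decide

/-- Concrete model of `Jaco n` for `n ≤ 13`. -/
def Gc (n : ℕ) : SimpleGraph (Fin n) where
  Adj k l := ((k : ℕ) + 1 < (l : ℕ) + 1 ∧ (l : ℕ) + 1 ≤ 2 * ((k : ℕ) + 1) - jf ((k : ℕ) + 1)) ∨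
    ((l : ℕ) + 1 < (k : ℕ) + 1 ∧ (k : ℕ) + 1 ≤ 2 * ((l : ℕ) + 1) - jf ((l : ℕ) + 1))
  symm := ⟨fun k l h => Or.symm h⟩
  loopless := ⟨fun k h => by rcases h with ⟨h, -⟩ | ⟨h, -⟩ <;> omega⟩

instance (n : ℕ) : DecidableRel (Gc n).Adj := fun k l =>
  inferInstanceAs (Decidable (_ ∨ _))

lemma jaco_eq_Gc (n : ℕ) (hn : n ≤ 13) : Jaco n = Gc n := by
  ext k l
  have hk : (k : ℕ) < n := k.isLt
  have hl : (l : ℕ) < n := l.isLt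
  show (((k : ℕ) + 1 < (l : ℕ) + 1 ∧ (l : ℕ) + 1 ≤ 2 * ((k : ℕ) + 1) - jacoInDeg ((k : ℕ) + 1)) ∨
    ((l : ℕ) + 1 < (k : ℕ) + 1 ∧ (k : ℕ) + 1 ≤ 2 * ((l : ℕ) + 1) - jacoInDeg ((l : ℕ) + 1))) ↔ _
  rw [jacoInDeg_val ((k : ℕ) + 1) (by omega), jacoInDeg_val ((l : ℕ) + 1) (by omega)]
  rfl

/-- `Gc n` with one extra edge `x~y`. -/
def Gd (n : ℕ) (x y : Fin n) : SimpleGraph (Fin n) where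
  Adj u v := (Gc n).Adj u v ∨ (u ≠ v ∧ ((u = x ∧ v = y) ∨ (u = y ∧ v = x)))
  symm := by
    constructor
    intro u v h
    rcases h with h | ⟨hne, h⟩
    · exact Or.inl ((Gc n).adj_symm h)
    · exact Or.inr ⟨fun he => hne he.symm, by tauto⟩
  loopless := by
    constructor
    intro u h
    rcases h with h | ⟨hne, -⟩
    · exact (Gc n).loopless.irrefl u h
    · exact hne rfl

instance (n : ℕ) (x y : Fin n) : DecidableRel (Gd n x y).Adj := fun k l =>
  inferInstanceAs (Decidable (_ ∨ _))

lemma domSet_mono {V : Type*} {G : SimpleGraph V} {s t : Set V} (h : s ⊆ t)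
    (hs : IsDomSet G s) : IsDomSet G t := by
  intro v hv
  obtain ⟨u, hu, ha⟩ := hs v (fun h' => hv (h h'))
  exact ⟨u, h hu, ha⟩

lemma singleton_dom_iff {V : Type*} (G : SimpleGraph V) (a : V) :
    IsDomSet G {a} ↔ ∀ v, v = a ∨ G.Adj a v := by
  constructor
  · intro h v
    by_cases h1 : v = a
    · exact Or.inl h1
    · obtain ⟨u, hu, ha⟩ := h v (by simpa using h1)
      rcases hu with rfl
      exact Or.inr ha
  · intro h v hv
    rcases h v with rfl | ha
    · exact absurd rfl hv
    · exact ⟨a, rfl, ha⟩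

lemma pair_dom_iff {V : Type*} (G : SimpleGraph V) (a b : V) :
    IsDomSet G {a, b} ↔ ∀ v, v = a ∨ v = b ∨ G.Adj a v ∨ G.Adj b v := by
  constructor
  · intro h v
    by_cases h1 : v = a
    · exact Or.inl h1
    by_cases h2 : v = b
    · exact Or.inr (Or.inl h2)
    obtain ⟨u, hu, ha⟩ := h v (by simp [h1, h2])
    rcases hu with rfl | hu
    · tauto
    · rcases hu with rfl
      tauto
  · intro h v hv
    simp only [Set.mem_insert_iff, Set.mem_singleton_iff, not_or] at hv
    rcases h v with rfl | rfl | ha | hb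
    · exact absurd rfl hv.1
    · exact absurd rfl hv.2
    · exact ⟨a, by simp, ha⟩
    · exact ⟨b, by simp, hb⟩

lemma triple_dom_iff {V : Type*} (G : SimpleGraph V) (a b c : V) :
    IsDomSet G {a, b, c} ↔
      ∀ v, v = a ∨ v = b ∨ v = c ∨ G.Adj a v ∨ G.Adj b v ∨ G.Adj c v := by
  constructor
  · intro h v
    by_cases h1 : v = a
    · exact Or.inl h1
    by_cases h2 : v = b
    · tauto
    by_cases h3 : v = c
    · tauto
    obtain ⟨u, hu, ha⟩ := h v (by simp [h1, h2, h3])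
    simp only [Set.mem_insert_iff, Set.mem_singleton_iff] at hu
    rcases hu with rfl | rfl | rfl <;> tauto
  · intro h v hv
    simp only [Set.mem_insert_iff, Set.mem_singleton_iff, not_or] at hv
    rcases h v with rfl | rfl | rfl | ha | hb | hc
    · exact absurd rfl hv.1
    · exact absurd rfl hv.2.1
    · exact absurd rfl hv.2.2
    · exact ⟨a, by simp, ha⟩
    · exact ⟨b, by simp, hb⟩
    · exact ⟨c, by simp, hc⟩

lemma subset_singleton_of_ncard_le_one {V : Type*} [Fintype V] [Nonempty V]
    {s : Set V} (h : s.ncard ≤ 1) : ∃ a : V, s ⊆ {a} := by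
  interval_cases hcard : s.ncard
  · refine ⟨Classical.arbitrary V, ?_⟩
    rw [Set.ncard_eq_zero (Set.toFinite s)] at hcard
    simp [hcard]
  · obtain ⟨a, rfl⟩ := Set.ncard_eq_one.mp hcard
    exact ⟨a, subset_rfl⟩

lemma subset_pair_of_ncard_le_two {V : Type*} [Fintype V] [Nonempty V]
    {s : Set V} (h : s.ncard ≤ 2) : ∃ a b : V, s ⊆ {a, b} := by
  interval_cases hcard : s.ncard
  · refine ⟨Classical.arbitrary V, Classical.arbitrary V, ?_⟩
    rw [Set.ncard_eq_zero (Set.toFinite s)] at hcard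
    simp [hcard]
  · obtain ⟨a, rfl⟩ := Set.ncard_eq_one.mp hcard
    exact ⟨a, a, by simp⟩
  · obtain ⟨a, b, -, rfl⟩ := Set.ncard_eq_two.mp hcard
    exact ⟨a, b, subset_rfl⟩

lemma domNum_eq' {V : Type*} [Fintype V] {G : SimpleGraph V} {m : ℕ}
    (hub : ∃ s : Set V, IsDomSet G s ∧ s.ncard = m)
    (hlb : ∀ s : Set V, IsDomSet G s → m ≤ s.ncard) : domNum G = m := by
  refine le_antisymm (Nat.sInf_le hub) (le_csInf ⟨m, hub⟩ ?_)
  rintro k ⟨s, hs, rfl⟩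
  exact hlb s hs

lemma domNum_eq_two {V : Type*} [Fintype V] [Nonempty V] {G : SimpleGraph V}
    (hub : ∃ s : Set V, IsDomSet G s ∧ s.ncard = 2)
    (h1 : ∀ a : V, ¬ IsDomSet G {a}) : domNum G = 2 := by
  refine domNum_eq' hub (fun s hs => ?_)
  by_contra hlt
  obtain ⟨a, hsub⟩ := subset_singleton_of_ncard_le_one (s := s) (by omega)
  exact h1 a (domSet_mono hsub hs)

lemma domNum_eq_three {V : Type*} [Fintype V] [Nonempty V] {G : SimpleGraph V}
    (hub : ∃ s : Set V, IsDomSet G s ∧ s.ncard = 3)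
    (h2 : ∀ a b : V, ¬ IsDomSet G {a, b}) : domNum G = 3 := by
  refine domNum_eq' hub (fun s hs => ?_)
  by_contra hlt
  obtain ⟨a, b, hsub⟩ := subset_pair_of_ncard_le_two (s := s) (by omega)
  exact h2 a b (domSet_mono hsub hs)

lemma murtage_eq_one_of {V : Type*} [Fintype V] {G H : SimpleGraph V}
    (hd : 2 ≤ domNum G) (hle : G ≤ H) (hlt : domNum H < domNum G)
    (hcard : (H.edgeSet \ G.edgeSet).ncard = 1) : murtage G = 1 := by
  rw [murtage, if_neg (by omega)]
  refine le_antisymm (Nat.sInf_le ⟨H, hle, hlt, hcard⟩)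
    (le_csInf ⟨1, H, hle, hlt, hcard⟩ ?_)
  rintro k ⟨H', hle', hlt', rfl⟩
  by_contra hk
  have hk0 : (H'.edgeSet \ G.edgeSet).ncard = 0 := by omega
  have hemp : H'.edgeSet \ G.edgeSet = ∅ :=
    (Set.ncard_eq_zero (Set.toFinite _)).mp hk0
  have hsub : H'.edgeSet ⊆ G.edgeSet := by rwa [Set.diff_eq_empty] at hemp
  have hEq : H' = G :=
    SimpleGraph.edgeSet_inj.mp (le_antisymm hsub (SimpleGraph.edgeSet_mono hle'))
  rw [hEq] at hlt'
  exact absurd hlt' (lt_irrefl _)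

lemma Gd_edge_diff (n : ℕ) (x y : Fin n) (hxy : x ≠ y) (hna : ¬ (Gc n).Adj x y) :
    (Gd n x y).edgeSet \ (Gc n).edgeSet = {s(x, y)} := by
  ext e
  refine Sym2.ind (fun u v => ?_) e
  simp only [Set.mem_diff, SimpleGraph.mem_edgeSet, Set.mem_singleton_iff, Sym2.eq_iff]
  show ((Gc n).Adj u v ∨ (u ≠ v ∧ ((u = x ∧ v = y) ∨ (u = y ∧ v = x)))) ∧
      ¬ (Gc n).Adj u v ↔ _
  constructor
  · rintro ⟨h | ⟨-, h⟩, hn⟩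
    · exact absurd h hn
    · tauto
  · rintro (⟨rfl, rfl⟩ | ⟨rfl, rfl⟩)
    · exact ⟨Or.inr ⟨hxy, Or.inl ⟨rfl, rfl⟩⟩, hna⟩
    · exact ⟨Or.inr ⟨fun h => hxy h.symm, Or.inr ⟨rfl, rfl⟩⟩,
        fun h => hna ((Gc n).adj_symm h)⟩

lemma ncard_pair' {V : Type*} (a b : V) (h : a ≠ b) : ({a, b} : Set V).ncard = 2 :=
  Set.ncard_pair h

lemma ncard_triple {V : Type*} [Fintype V] (a b c : V) (hab : a ≠ b) (hac : a ≠ c)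
    (hbc : b ≠ c) : ({a, b, c} : Set V).ncard = 3 := by
  rw [Set.ncard_insert_of_notMem (by simp [hab, hac]) (Set.toFinite _),
    Set.ncard_pair hbc]

/-- For `n ∈ {4, 5, 12, 13}`, `m(J_n(1)) = 1`. -/
theorem jaco_murtage_eq_one (n : ℕ) (hn : n = 4 ∨ n = 5 ∨ n = 12 ∨ n = 13) :
    murtage (Jaco n) = 1 := by
  rcases hn with rfl | rfl | rfl | rfl
  · rw [jaco_eq_Gc 4 (by norm_num)]
    have hγ : domNum (Gc 4) = 2 := by
      refine domNum_eq_two ⟨{1, 3}, (pair_dom_iff _ _ _).mpr (by decide), ncard_pair' _ _ (by decide)⟩ ?_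
      intro a h
      rw [singleton_dom_iff] at h
      revert h
      revert a
      decide
    refine murtage_eq_one_of (H := Gd 4 1 3) (by omega) (fun u v h => Or.inl h) ?_ ?_
    · have h2 : domNum (Gd 4 1 3) ≤ 1 :=
        Nat.sInf_le ⟨{1}, (singleton_dom_iff _ _).mpr (by decide), Set.ncard_singleton _⟩
      omega
    · rw [Gd_edge_diff 4 1 3 (by decide) (by decide)]
      exact Set.ncard_singleton _
  · rw [jaco_eq_Gc 5 (by norm_num)]
    have hγ : domNum (Gc 5) = 2 := by
      refine domNum_eq_two ⟨{0, 3}, (pair_dom_iff _ _ _).mpr (by decide), ncard_pair' _ _ (by decide)⟩ ?_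
      intro a h
      rw [singleton_dom_iff] at h
      revert h
      revert a
      decide
    refine murtage_eq_one_of (H := Gd 5 0 2) (by omega) (fun u v h => Or.inl h) ?_ ?_
    · have h2 : domNum (Gd 5 0 2) ≤ 1 :=
        Nat.sInf_le ⟨{2}, (singleton_dom_iff _ _).mpr (by decide), Set.ncard_singleton _⟩
      omega
    · rw [Gd_edge_diff 5 0 2 (by decide) (by decide)]
      exact Set.ncard_singleton _
  · rw [jaco_eq_Gc 12 (by norm_num)]
    have hγ : domNum (Gc 12) = 3 := by
      refine domNum_eq_three ⟨{0, 2, 7}, (triple_dom_iff _ _ _ _).mpr (by decide),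
        ncard_triple _ _ _ (by decide) (by decide) (by decide)⟩ ?_
      intro a b h
      rw [pair_dom_iff] at h
      revert h
      revert b
      revert a
      decide
    refine murtage_eq_one_of (H := Gd 12 0 7) (by omega) (fun u v h => Or.inl h) ?_ ?_
    · have h2 : domNum (Gd 12 0 7) ≤ 2 :=
        Nat.sInf_le ⟨{2, 7}, (pair_dom_iff _ _ _).mpr (by decide), ncard_pair' _ _ (by decide)⟩
      omega
    · rw [Gd_edge_diff 12 0 7 (by decide) (by decide)]
      exact Set.ncard_singleton _
  · rw [jaco_eq_Gc 13 (by norm_num)]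
    have hγ : domNum (Gc 13) = 3 := by
      refine domNum_eq_three ⟨{0, 2, 7}, (triple_dom_iff _ _ _ _).mpr (by decide),
        ncard_triple _ _ _ (by decide) (by decide) (by decide)⟩ ?_
      intro a b h
      rw [pair_dom_iff] at h
      revert h
      revert b
      revert a
      decide
    refine murtage_eq_one_of (H := Gd 13 0 7) (by omega) (fun u v h => Or.inl h) ?_ ?_
    · have h2 : domNum (Gd 13 0 7) ≤ 2 :=
        Nat.sInf_le ⟨{2, 7}, (pair_dom_iff _ _ _).mpr (by decide), ncard_pair' _ _ (by decide)⟩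
      omega
    · rw [Gd_edge_diff 13 0 7 (by decide) (by decide)]
      exact Set.ncard_singleton _
end
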